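/- There is a bijection between Schröder paths $p$ from $(i,0)$ to $(0,j)$ with exactly $k$ diagonal steps and words in $\{A,B,C\}$ with $j-k$ letters $A$, $k$ letters $B$, and $i-k$ letters $C$; under this bijection the area satisfies $\mathcal{A}(p) = 2I(w(p)) + k^2$, where $I(w)$ is the number of inversions of $w$ in the order $A < B < C$ plus the number of pairs of (distinct positions of) equal letters $B$. -/

import Mathlib

/-- A step of a Schröder path: up `(0,1)`, left `(-1,0)`, or diagonal `(-1,1)`. -/
inductive SStep
  | up
  | left
  | diag
deriving DecidableEq

instance : Fintype SStep :=
  ⟨{SStep.up, SStep.left, SStep.diag}, by intro s; cases s <;> decide⟩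

/-- The result of taking a step from a given position. -/
def stepMove : ℤ × ℤ → SStep → ℤ × ℤ
  | (x, y), SStep.up => (x, y + 1)
  | (x, y), SStep.left => (x - 1, y)
  | (x, y), SStep.diag => (x - 1, y + 1)

/-- Endpoint of a walk starting at `p` and taking the steps in the list. -/
def endPos : ℤ × ℤ → List SStep → ℤ × ℤ
  | p, [] => p
  | p, s :: rest => endPos (stepMove p s) rest

/-- The area to the left of the path, `∑ (x_s + x_{s+1}) (y_{s+1} - y_s)`:
an up step from `(x,y)` contributes `2x`, a diagonal step `2x - 1`, a left step `0`. -/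
def areaOf : ℤ × ℤ → List SStep → ℤ
  | _, [] => 0
  | (x, y), SStep.up :: rest => 2 * x + areaOf (x, y + 1) rest
  | (x, y), SStep.left :: rest => areaOf (x - 1, y) rest
  | (x, y), SStep.diag :: rest => (2 * x - 1) + areaOf (x - 1, y + 1) rest

/-- All lists of steps of length `n`. -/
def allLists : ℕ → Finset (List SStep)
  | 0 => {[]}
  | n + 1 => Finset.univ.biUnion fun s : SStep => (allLists n).image fun l => s :: l

/-- The (finite) set of Schröder paths from `(i,0)` to `(0,j)`, encoded as their
lists of steps read from the starting point `(i,0)`. -/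
def pathFinset (i j : ℕ) : Finset (List SStep) :=
  ((Finset.range (i + j + 1)).biUnion allLists).filter
    fun p => endPos ((i : ℤ), 0) p = (0, (j : ℤ))

/-- Number of diagonal steps of a path. -/
def diagCount (p : List SStep) : ℕ := p.count SStep.diag

/-- The partition function `Z_{(i,0)→(0,j)} = ∑_p γ^{k(p)} q^{A(p)}` of weighted
Schröder paths from `(i,0)` to `(0,j)`. -/
def Zpf {R : Type*} [CommRing R] (γ q : R) (i j : ℕ) : R :=
  ∑ p ∈ pathFinset i j, γ ^ diagCount p * q ^ (areaOf ((i : ℤ), 0) p).toNat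
/-- All words of length `n` over the three-letter ordered alphabet `A < B < C`,
encoded as `Fin 3` with `A = 0`, `B = 1`, `C = 2`. -/
def allWords : ℕ → Finset (List (Fin 3))
  | 0 => {[]}
  | n + 1 => Finset.univ.biUnion fun s : Fin 3 => (allWords n).image fun l => s :: l

/-- The words with `a` letters `A`, `b` letters `B` and `c` letters `C`. -/
def wordsABC (a b c : ℕ) : Finset (List (Fin 3)) :=
  (allWords (a + b + c)).filter fun w =>
    w.count (0 : Fin 3) = a ∧ w.count (1 : Fin 3) = b ∧ w.count (2 : Fin 3) = c

/-- The number of inversions of a word: pairs of positions `s < t` with `w_s > w_t`. -/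
def inversions (w : List (Fin 3)) : ℕ :=
  (Finset.univ.filter fun p : Fin w.length × Fin w.length =>
    p.1 < p.2 ∧ w.get p.2 < w.get p.1).card

/-- The word of a Schröder path: reading the steps from the endpoint downwards
(the step list is stored from the starting point, so we reverse it), record
`A = 0` for each up step, `B = 1` for each diagonal step, `C = 2` for each left step. -/
def wordOf (p : List SStep) : List (Fin 3) :=
  p.reverse.map fun s =>
    match s with
    | SStep.up => (0 : Fin 3)
    | SStep.diag => 1
    | SStep.left => 2

/-! ### Auxiliary definitions and lemmas -/

/-- The letter of a step. -/
def letterOf : SStep → Fin 3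
  | SStep.up => 0
  | SStep.diag => 1
  | SStep.left => 2

/-- The step of a letter. -/
def stepOf : Fin 3 → SStep
  | 0 => SStep.up
  | 1 => SStep.diag
  | 2 => SStep.left

lemma letterOf_stepOf (c : Fin 3) : letterOf (stepOf c) = c := by fin_cases c <;> rfl

lemma stepOf_letterOf (s : SStep) : stepOf (letterOf s) = s := by cases s <;> rfl

lemma wordOf_eq (p : List SStep) : wordOf p = p.reverse.map letterOf :=
  List.map_congr_left (fun s _ => by cases s <;> rfl)

lemma wordOf_cons (s : SStep) (p : List SStep) :
    wordOf (s :: p) = wordOf p ++ [letterOf s] := by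
  simp [wordOf_eq]

/-- Recursive inversion count. -/
def invW : List (Fin 3) → ℕ
  | [] => 0
  | x :: w => w.countP (fun y => decide (y < x)) + invW w

lemma countP_eq_sum (q : Fin 3 → Prop) [DecidablePred q] (w : List (Fin 3)) :
    w.countP (fun y => decide (q y)) = ∑ t : Fin w.length, if q (w.get t) then 1 else 0 := by
  induction w with
  | nil => simp
  | cons a w ih =>
    rw [List.countP_cons]
    simp only [List.length_cons]
    rw [Fin.sum_univ_succ]
    simp only [List.get_eq_getElem, List.getElem_cons_zero, List.getElem_cons_succ]
    rw [ih]
    by_cases h : q a <;> simp [h] <;> omega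

lemma inversions_sum (v : List (Fin 3)) :
    inversions v = ∑ s : Fin v.length, ∑ t : Fin v.length,
      if s < t ∧ v.get t < v.get s then 1 else 0 := by
  rw [inversions, Finset.card_filter, Fintype.sum_prod_type]

lemma inversions_cons (x : Fin 3) (w : List (Fin 3)) :
    inversions (x :: w) = w.countP (fun y => decide (y < x)) + inversions w := by
  rw [inversions_sum, inversions_sum, countP_eq_sum (fun y => y < x) w]
  show (∑ s : Fin (w.length + 1), ∑ t : Fin (w.length + 1),
      if s < t ∧ (x :: w).get t < (x :: w).get s then 1 else 0) = _
  rw [Fin.sum_univ_succ]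
  congr 1
  · rw [Fin.sum_univ_succ]
    simp [Fin.succ_pos]
  · refine Finset.sum_congr rfl fun s _ => ?_
    rw [Fin.sum_univ_succ]
    simp [Fin.succ_lt_succ_iff]

lemma inversions_eq_invW (w : List (Fin 3)) : inversions w = invW w := by
  induction w with
  | nil => simp [inversions, invW]
  | cons x w ih => rw [inversions_cons, invW, ih]

lemma invW_append_singleton (w : List (Fin 3)) (y : Fin 3) :
    invW (w ++ [y]) = invW w + w.countP (fun z => decide (y < z)) := by
  induction w with
  | nil => simp [invW]
  | cons x w ih =>
    rw [List.cons_append, invW, invW, ih, List.countP_append, List.countP_cons]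
    simp only [List.countP_cons, List.countP_nil]
    by_cases h : y < x <;> simp [h, not_lt.mp] <;> omega

lemma countP_lt0 (w : List (Fin 3)) :
    w.countP (fun z => decide ((0 : Fin 3) < z)) = w.count 1 + w.count 2 := by
  induction w with
  | nil => simp
  | cons a w ih =>
    rw [List.countP_cons]
    fin_cases a <;> simp [List.count_cons, ih] <;> omega

lemma countP_lt1 (w : List (Fin 3)) :
    w.countP (fun z => decide ((1 : Fin 3) < z)) = w.count 2 := by
  induction w with
  | nil => simp
  | cons a w ih =>
    rw [List.countP_cons]
    fin_cases a <;> simp [List.count_cons, ih] <;> omega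

lemma countP_lt2 (w : List (Fin 3)) :
    w.countP (fun z => decide ((2 : Fin 3) < z)) = 0 := by
  induction w with
  | nil => simp
  | cons a w ih =>
    rw [List.countP_cons]
    fin_cases a <;> simp [ih]

lemma letterOf_injective : Function.Injective letterOf := by
  intro a b h
  cases a <;> cases b <;> first | rfl | simp [letterOf] at h

lemma stepOf_injective : Function.Injective stepOf := by
  intro a b h
  fin_cases a <;> fin_cases b <;> first | rfl | simp [stepOf] at h

lemma count_wordOf (p : List SStep) (s : SStep) :
    (wordOf p).count (letterOf s) = p.count s := by
  rw [wordOf_eq, List.count_map_of_injective _ _ letterOf_injective, List.count_reverse]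

lemma endPos_eq (p : List SStep) : ∀ x y : ℤ,
    endPos (x, y) p = (x - (p.count SStep.left + p.count SStep.diag),
      y + (p.count SStep.up + p.count SStep.diag)) := by
  induction p with
  | nil => intro x y; simp [endPos]
  | cons s p ih =>
    intro x y
    cases s <;> simp [endPos, stepMove, ih, List.count_cons, Prod.ext_iff] <;>
      push_cast <;> omega

lemma length_eq_counts (p : List SStep) :
    p.length = p.count SStep.up + p.count SStep.left + p.count SStep.diag := by
  induction p with
  | nil => simp
  | cons s p ih =>
    cases s <;> simp [List.count_cons, ih] <;> omega

lemma mem_allLists {p : List SStep} {n : ℕ} : p ∈ allLists n ↔ p.length = n := by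
  induction n generalizing p with
  | zero => simp [allLists, List.length_eq_zero_iff]
  | succ n ih =>
    cases p with
    | nil => simp [allLists]
    | cons s q =>
      simp only [allLists, Finset.mem_biUnion, Finset.mem_univ, Finset.mem_image, true_and,
        List.length_cons, Nat.add_right_cancel_iff]
      constructor
      · rintro ⟨a, l, hl, h⟩
        obtain ⟨rfl, rfl⟩ : a = s ∧ l = q := by
          constructor <;> injection h
        exact ih.mp hl
      · intro h
        exact ⟨s, q, ih.mpr h, rfl⟩

lemma counts_of_endPos {i j : ℕ} {p : List SStep}
    (h : endPos ((i : ℤ), 0) p = (0, (j : ℤ))) :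
    p.count SStep.left + p.count SStep.diag = i ∧
      p.count SStep.up + p.count SStep.diag = j := by
  rw [endPos_eq] at h
  rw [Prod.ext_iff] at h
  obtain ⟨h1, h2⟩ := h
  constructor <;> omega

lemma mem_pathFinset {i j : ℕ} {p : List SStep} :
    p ∈ pathFinset i j ↔ endPos ((i : ℤ), 0) p = (0, (j : ℤ)) := by
  simp only [pathFinset, Finset.mem_filter, Finset.mem_biUnion, Finset.mem_range, mem_allLists]
  constructor
  · exact fun h => h.2
  · intro h
    refine ⟨⟨p.length, ?_, rfl⟩, h⟩
    obtain ⟨h1, h2⟩ := counts_of_endPos h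
    have := length_eq_counts p
    omega

lemma mem_allWords {w : List (Fin 3)} {n : ℕ} : w ∈ allWords n ↔ w.length = n := by
  induction n generalizing w with
  | zero => simp [allWords, List.length_eq_zero_iff]
  | succ n ih =>
    cases w with
    | nil => simp [allWords]
    | cons s q =>
      simp only [allWords, Finset.mem_biUnion, Finset.mem_univ, Finset.mem_image, true_and,
        List.length_cons, Nat.add_right_cancel_iff]
      constructor
      · rintro ⟨a, l, hl, h⟩
        obtain ⟨rfl, rfl⟩ : a = s ∧ l = q := by
          constructor <;> injection h
        exact ih.mp hl
      · intro h
        exact ⟨s, q, ih.mpr h, rfl⟩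

lemma area_eq (p : List SStep) : ∀ x y : ℤ,
    x = p.count SStep.left + p.count SStep.diag →
    areaOf (x, y) p = 2 * (invW (wordOf p) : ℤ) + (p.count SStep.diag : ℤ) ^ 2 := by
  induction p with
  | nil => intro x y _; simp [areaOf, wordOf, invW]
  | cons s p ih =>
    intro x y hx
    have hw := invW_append_singleton (wordOf p) (letterOf s)
    rw [← wordOf_cons] at hw
    cases s with
    | up =>
      simp only [List.count_cons, beq_iff_eq, beq_self_eq_true, reduceCtorEq, if_false, add_zero] at hx
      have hc : (wordOf p).countP (fun z => decide (letterOf SStep.up < z))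
          = p.count SStep.diag + p.count SStep.left := by
        rw [show letterOf SStep.up = 0 from rfl, countP_lt0,
          show (1 : Fin 3) = letterOf SStep.diag from rfl,
          show (2 : Fin 3) = letterOf SStep.left from rfl, count_wordOf, count_wordOf]
      rw [show areaOf (x, y) (SStep.up :: p) = 2 * x + areaOf (x, y + 1) p from rfl,
        ih x (y + 1) hx, hw, hc]
      simp only [List.count_cons, beq_iff_eq, beq_self_eq_true, reduceCtorEq, if_false, add_zero]
      push_cast
      linarith
    | left =>
      simp only [List.count_cons, beq_iff_eq, beq_self_eq_true, reduceCtorEq, if_false, if_true, add_zero] at hx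
      have hc : (wordOf p).countP (fun z => decide (letterOf SStep.left < z)) = 0 := by
        rw [show letterOf SStep.left = 2 from rfl, countP_lt2]
      rw [show areaOf (x, y) (SStep.left :: p) = areaOf (x - 1, y) p from rfl,
        ih (x - 1) y (by push_cast at hx ⊢; linarith), hw, hc]
      simp only [List.count_cons, beq_iff_eq, beq_self_eq_true, reduceCtorEq, if_false, add_zero]
    | diag =>
      simp only [List.count_cons, beq_iff_eq, beq_self_eq_true, reduceCtorEq, if_false, if_true, add_zero] at hx
      have hc : (wordOf p).countP (fun z => decide (letterOf SStep.diag < z))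
          = p.count SStep.left := by
        rw [show letterOf SStep.diag = 1 from rfl, countP_lt1,
          show (2 : Fin 3) = letterOf SStep.left from rfl, count_wordOf]
      rw [show areaOf (x, y) (SStep.diag :: p) = (2 * x - 1) + areaOf (x - 1, y + 1) p from rfl,
        ih (x - 1) (y + 1) (by push_cast at hx ⊢; linarith), hw, hc]
      simp only [List.count_cons, beq_iff_eq, beq_self_eq_true, reduceCtorEq, if_false, if_true, add_zero]
      push_cast at hx ⊢
      nlinarith [hx]

lemma wordOf_injective : Function.Injective wordOf := by
  intro p q h
  rw [wordOf_eq, wordOf_eq] at h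
  exact List.reverse_injective (List.map_injective_iff.mpr letterOf_injective h)

/-- The map `p ↦ w(p)` is a bijection between Schröder paths from `(i,0)` to `(0,j)`
with exactly `k` diagonal steps and words with `j-k` letters `A`, `k` letters `B` and
`i-k` letters `C`; under this bijection the area satisfies `𝒜(p) = 2 I(w(p)) + k²`,
with `I` the inversion number. -/
theorem schroeder_path_word_bijection (i j k : ℕ) (hki : k ≤ i) (hkj : k ≤ j) :
    ((pathFinset i j).filter fun p => diagCount p = k).image wordOf =
        wordsABC (j - k) k (i - k) ∧
      Set.InjOn wordOf (((pathFinset i j).filter fun p => diagCount p = k) : Set (List SStep)) ∧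
      ∀ p ∈ (pathFinset i j).filter fun p => diagCount p = k,
        (areaOf ((i : ℤ), 0) p).toNat = 2 * inversions (wordOf p) + k ^ 2 := by
  refine ⟨?_, wordOf_injective.injOn, ?_⟩
  · ext w
    simp only [Finset.mem_image, Finset.mem_filter, wordsABC]
    simp only [Finset.mem_filter, mem_pathFinset, mem_allWords, diagCount]
    constructor
    · rintro ⟨p, ⟨⟨hend, hk⟩, rfl⟩⟩
      obtain ⟨h1, h2⟩ := counts_of_endPos hend
      have hlen : (wordOf p).length = p.length := by
        rw [wordOf_eq]; simp
      have c0 : (wordOf p).count (0 : Fin 3) = p.count SStep.up :=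
        count_wordOf p SStep.up
      have c1 : (wordOf p).count (1 : Fin 3) = p.count SStep.diag :=
        count_wordOf p SStep.diag
      have c2 : (wordOf p).count (2 : Fin 3) = p.count SStep.left :=
        count_wordOf p SStep.left
      have := length_eq_counts p
      refine ⟨?_, ?_, ?_, ?_⟩ <;> omega
    · rintro ⟨hlen, h0, h1, h2⟩
      refine ⟨(w.map stepOf).reverse, ⟨?_, ?_⟩, ?_⟩
      · have cl : ((w.map stepOf).reverse).count SStep.left = w.count 2 := by
          rw [List.count_reverse, show SStep.left = stepOf 2 from rfl,
            List.count_map_of_injective _ _ stepOf_injective]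
        have cd : ((w.map stepOf).reverse).count SStep.diag = w.count 1 := by
          rw [List.count_reverse, show SStep.diag = stepOf 1 from rfl,
            List.count_map_of_injective _ _ stepOf_injective]
        have cu : ((w.map stepOf).reverse).count SStep.up = w.count 0 := by
          rw [List.count_reverse, show SStep.up = stepOf 0 from rfl,
            List.count_map_of_injective _ _ stepOf_injective]
        rw [endPos_eq, Prod.ext_iff]
        rw [cl, cd, cu, h0, h1, h2]
        constructor <;> push_cast <;> [omega; omega]
      · rw [List.count_reverse, show SStep.diag = stepOf 1 from rfl,
          List.count_map_of_injective _ _ stepOf_injective, h1]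
      · rw [wordOf_eq, List.reverse_reverse, List.map_map]
        have : letterOf ∘ stepOf = id := by funext c; exact letterOf_stepOf c
        rw [this, List.map_id]
  · intro p hp
    simp only [Finset.mem_filter] at hp
    simp only [mem_pathFinset, diagCount] at hp
    obtain ⟨hend, hk⟩ := hp
    obtain ⟨h1, h2⟩ := counts_of_endPos hend
    have harea := area_eq p (i : ℤ) 0 (by push_cast; omega)
    have : areaOf ((i : ℤ), 0) p = ((2 * inversions (wordOf p) + k ^ 2 : ℕ) : ℤ) := by
      rw [harea, inversions_eq_invW, hk]
      push_cast
      ring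
    rw [this, Int.toNat_natCast]
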